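/- arXiv:1905.11243 — 2 statements merged into one kernel-verified Lean document; each statement's English description precedes it below -/
import Mathlib

section
/- Let L be a Leibniz A-algebra over a field F and let B be an ideal of L. Then the quotient Leibniz algebra L/B is also an A-algebra. -/
/-- A (right) Leibniz algebra structure on an `F`-vector space `L`:
a bilinear bracket satisfying `[x,[y,z]] = [[x,y],z] - [[x,z],y]`. -/
structure LeibnizAlg (F : Type*) (L : Type*) [Field F] [AddCommGroup L] [Module F L] where
  bracket : L →ₗ[F] L →ₗ[F] L
  leibniz : ∀ x y z : L,
    bracket x (bracket y z) = bracket (bracket x y) z - bracket (bracket x z) y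

namespace LeibnizAlg

variable {F : Type*} {L : Type*} [Field F] [AddCommGroup L] [Module F L]

/-- The product `[M, N]` of two subspaces: the span of all brackets `[m, n]`. -/
def prod (A : LeibnizAlg F L) (M N : Submodule F L) : Submodule F L :=
  Submodule.span F {z : L | ∃ m ∈ M, ∃ n ∈ N, z = A.bracket m n}

/-- A subalgebra: a subspace closed under the product. -/
def IsSubalgebra (A : LeibnizAlg F L) (S : Submodule F L) : Prop :=
  A.prod S S ≤ S

/-- A (two-sided) ideal: `[I, L] ⊆ I` and `[L, I] ⊆ I`. -/
def IsIdeal (A : LeibnizAlg F L) (I : Submodule F L) : Prop :=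
  A.prod I ⊤ ≤ I ∧ A.prod ⊤ I ≤ I

/-- Lower central series of a subspace `U`: `lcs U 0 = U = U¹`,
`lcs U k = U^(k+1)`, i.e. `lcs U (k+1) = [lcs U k, U]`. -/
def lcs (A : LeibnizAlg F L) (U : Submodule F L) : ℕ → Submodule F L
  | 0 => U
  | k + 1 => A.prod (lcs A U k) U

/-- `U` is nilpotent: `U^(n+1) = 0` for some `n`. -/
def IsNilpotentSub (A : LeibnizAlg F L) (U : Submodule F L) : Prop :=
  ∃ n : ℕ, A.lcs U n = ⊥

/-- `U` is abelian: `[U, U] = 0`. -/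
def IsAbelian (A : LeibnizAlg F L) (U : Submodule F L) : Prop :=
  A.prod U U = ⊥

/-- An `A`-algebra: every nilpotent subalgebra is abelian. -/
def IsAAlgebra (A : LeibnizAlg F L) : Prop :=
  ∀ U : Submodule F L, A.IsSubalgebra U → A.IsNilpotentSub U → A.IsAbelian U

/-- Derived series: `derSeries 0 = L`, `derSeries (k+1) = [derSeries k, derSeries k]`. -/
def derSeries (A : LeibnizAlg F L) : ℕ → Submodule F L
  | 0 => ⊤
  | k + 1 => A.prod (derSeries A k) (derSeries A k)

/-- `L` is solvable: some term of the derived series vanishes. -/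
def IsSolvable (A : LeibnizAlg F L) : Prop :=
  ∃ n : ℕ, A.derSeries n = ⊥

/-- The centralizer `Z_L(U)` of a subspace `U`. -/
def centralizer (A : LeibnizAlg F L) (U : Submodule F L) : Submodule F L where
  carrier := {x : L | ∀ u ∈ U, A.bracket x u = 0 ∧ A.bracket u x = 0}
  add_mem' := by
    intro a b ha hb u hu
    refine ⟨?_, ?_⟩
    · rw [map_add, LinearMap.add_apply, (ha u hu).1, (hb u hu).1, add_zero]
    · rw [map_add, (ha u hu).2, (hb u hu).2, add_zero]
  zero_mem' := by
    intro u hu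
    refine ⟨?_, ?_⟩
    · rw [map_zero, LinearMap.zero_apply]
    · rw [map_zero]
  smul_mem' := by
    intro c a ha u hu
    refine ⟨?_, ?_⟩
    · rw [map_smul, LinearMap.smul_apply, (ha u hu).1, smul_zero]
    · rw [map_smul, (ha u hu).2, smul_zero]

/-- The centre of the subalgebra `M`: elements of `M` centralizing `M`. -/
def centerOf (A : LeibnizAlg F L) (M : Submodule F L) : Submodule F L :=
  M ⊓ A.centralizer M

/-- `N` is the nilradical: the largest nilpotent ideal. -/
def IsNilradical (A : LeibnizAlg F L) (N : Submodule F L) : Prop :=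
  A.IsIdeal N ∧ A.IsNilpotentSub N ∧
    ∀ I : Submodule F L, A.IsIdeal I → A.IsNilpotentSub I → I ≤ N

/-- A minimal ideal: a nonzero ideal containing no ideal other than `0` and itself. -/
def IsMinimalIdeal (A : LeibnizAlg F L) (I : Submodule F L) : Prop :=
  A.IsIdeal I ∧ I ≠ ⊥ ∧ ∀ J : Submodule F L, A.IsIdeal J → J ≤ I → J = ⊥ ∨ J = I

/-- A maximal subalgebra. -/
def IsMaximalSubalgebra (A : LeibnizAlg F L) (M : Submodule F L) : Prop :=
  A.IsSubalgebra M ∧ M ≠ ⊤ ∧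
    ∀ S : Submodule F L, A.IsSubalgebra S → M ≤ S → S = M ∨ S = ⊤

/-- `L` is φ-free: every ideal contained in all maximal subalgebras is zero. -/
def IsPhiFree (A : LeibnizAlg F L) : Prop :=
  ∀ I : Submodule F L, A.IsIdeal I →
    (∀ M : Submodule F L, A.IsMaximalSubalgebra M → I ≤ M) → I = ⊥

/-- `Asoc L`: the sum of the abelian minimal ideals. -/
def asoc (A : LeibnizAlg F L) : Submodule F L :=
  sSup {I : Submodule F L | A.IsMinimalIdeal I ∧ A.IsAbelian I}

/-- A Cartan subalgebra: a nilpotent, self-normalizing subalgebra. -/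
def IsCartan (A : LeibnizAlg F L) (C : Submodule F L) : Prop :=
  A.IsSubalgebra C ∧ A.IsNilpotentSub C ∧
    ∀ x : L, (∀ c ∈ C, A.bracket x c ∈ C ∧ A.bracket c x ∈ C) → x ∈ C

/-- A maximal nilpotent subalgebra. -/
def IsMaxNilpotentSubalgebra (A : LeibnizAlg F L) (U : Submodule F L) : Prop :=
  A.IsSubalgebra U ∧ A.IsNilpotentSub U ∧
    ∀ V : Submodule F L, A.IsSubalgebra V → A.IsNilpotentSub V → U ≤ V → V = U

end LeibnizAlg

namespace LeibnizAlg

attribute [local instance 100] LieRing.ofAssociativeRing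

variable {F : Type*} {L : Type*} [Field F] [AddCommGroup L] [Module F L]
variable (A : LeibnizAlg F L)

theorem bracket_mem_prod {M N : Submodule F L} {m n : L} (hm : m ∈ M) (hn : n ∈ N) :
    A.bracket m n ∈ A.prod M N :=
  Submodule.subset_span ⟨m, hm, n, hn, rfl⟩

theorem prod_le {M N X : Submodule F L}
    (h : ∀ m ∈ M, ∀ n ∈ N, A.bracket m n ∈ X) : A.prod M N ≤ X := by
  rw [prod, Submodule.span_le]
  rintro z ⟨m, hm, n, hn, rfl⟩
  exact h m hm n hn

theorem prod_mono {M M' N N' : Submodule F L} (h1 : M ≤ M') (h2 : N ≤ N') :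
    A.prod M N ≤ A.prod M' N' :=
  A.prod_le fun m hm n hn => A.bracket_mem_prod (h1 hm) (h2 hn)

theorem lcs_mono {M N : Submodule F L} (h : M ≤ N) : ∀ k, A.lcs M k ≤ A.lcs N k := by
  intro k; induction k with
  | zero => exact h
  | succ k ih => exact A.prod_mono ih h

theorem lcs_succ_le {M : Submodule F L} (h : A.IsSubalgebra M) :
    ∀ k, A.lcs M (k + 1) ≤ A.lcs M k := by
  intro k; induction k with
  | zero => exact h
  | succ k ih => exact A.prod_mono ih le_rfl

theorem lcs_le_of_le {M : Submodule F L} (h : A.IsSubalgebra M) {j k : ℕ} (hjk : j ≤ k) :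
    A.lcs M k ≤ A.lcs M j := by
  induction hjk with
  | refl => exact le_rfl
  | step _ ih => exact le_trans (A.lcs_succ_le h _) ih

theorem deriv (v x y : L) :
    A.bracket (A.bracket x y) v
      = A.bracket (A.bracket x v) y + A.bracket x (A.bracket y v) := by
  rw [A.leibniz x y v]; abel

theorem pow_ker_bracket (g : Module.End F L)
    (hg : ∀ x y : L, g (A.bracket x y) = A.bracket (g x) y + A.bracket x (g y)) :
    ∀ (N a b : ℕ) (x y : L), a + b = N → (g ^ a) x = 0 → (g ^ b) y = 0 →
      (g ^ N) (A.bracket x y) = 0 := by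
  intro N
  induction N with
  | zero =>
    intro a b x y hab hx hy
    obtain ⟨rfl, rfl⟩ : a = 0 ∧ b = 0 := by omega
    simp only [pow_zero, Module.End.one_apply] at hx hy ⊢
    rw [hx, map_zero, LinearMap.zero_apply]
  | succ N ih =>
    intro a b x y hab hx hy
    rcases Nat.eq_zero_or_pos a with rfl | ha
    · rw [pow_zero, Module.End.one_apply] at hx
      rw [hx, map_zero, LinearMap.zero_apply, map_zero]
    rcases Nat.eq_zero_or_pos b with rfl | hb
    · rw [pow_zero, Module.End.one_apply] at hy
      rw [hy, map_zero, map_zero]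
    obtain ⟨a', rfl⟩ : ∃ a', a = a' + 1 := ⟨a - 1, by omega⟩
    obtain ⟨b', rfl⟩ : ∃ b', b = b' + 1 := ⟨b - 1, by omega⟩
    have hx' : (g ^ a') (g x) = 0 := by
      rw [← Module.End.mul_apply, ← pow_succ]; exact hx
    have hy' : (g ^ b') (g y) = 0 := by
      rw [← Module.End.mul_apply, ← pow_succ]; exact hy
    have h1 : (g ^ N) (A.bracket (g x) y) = 0 := ih a' (b' + 1) (g x) y (by omega) hx' hy
    have h2 : (g ^ N) (A.bracket x (g y)) = 0 := ih (a' + 1) b' x (g y) (by omega) hx hy'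
    calc (g ^ (N + 1)) (A.bracket x y) = (g ^ N) (g (A.bracket x y)) := by
          rw [pow_succ, Module.End.mul_apply]
      _ = (g ^ N) (A.bracket (g x) y + A.bracket x (g y)) := by rw [hg]
      _ = 0 := by rw [map_add, h1, h2, add_zero]


theorem isNilpotentSub_of_forall_pow [FiniteDimensional F L] {C : Submodule F L}
    (hC : A.IsSubalgebra C)
    (h : ∀ v ∈ C, ∃ m : ℕ, ∀ x ∈ C, ((A.bracket.flip v) ^ m) x = 0) :
    A.IsNilpotentSub C := by
  classical
  have hcl : ∀ x ∈ C, ∀ v ∈ C, A.bracket x v ∈ C := fun x hx v hv =>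
    hC (A.bracket_mem_prod hx hv)
  let brC : C →ₗ[F] C →ₗ[F] C :=
    LinearMap.mk₂ F (fun x v => ⟨A.bracket x v, hcl x x.2 v v.2⟩)
      (fun x y v => Subtype.ext (by simp))
      (fun c x v => Subtype.ext (by simp))
      (fun x y v => Subtype.ext (by simp))
      (fun c x v => Subtype.ext (by simp))
  have hbrC : ∀ x v : C, (brC x v : L) = A.bracket x v := fun x v => rfl
  let φ : C →ₗ[F] Module.End F C := brC.flip
  have hφ : ∀ v x : C, ((φ v) x : L) = A.bracket x v := fun v x => rfl
  have hrange : ∀ {f g : Module.End F ↥C}, f ∈ LinearMap.range φ → g ∈ LinearMap.range φ →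
      ⁅f, g⁆ ∈ LinearMap.range φ := by
    rintro f g ⟨v, rfl⟩ ⟨w, rfl⟩
    refine ⟨brC w v, ?_⟩
    ext x
    have h9 := A.deriv (v : L) (x : L) (w : L)
    have hL : ((φ (brC w v)) x : L) = A.bracket x (A.bracket w v) := rfl
    have hR : ((⁅φ v, φ w⁆ x : C) : L)
        = A.bracket (A.bracket x w) v - A.bracket (A.bracket x v) w := by
      rw [Ring.lie_def]
      simp only [LinearMap.sub_apply, Module.End.mul_apply, AddSubgroupClass.coe_sub, hφ]
    rw [hL, hR, h9]
    abel
  let S : LieSubalgebra F (Module.End F C) := { LinearMap.range φ with lie_mem' := hrange }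
  have hφS : ∀ v : C, φ v ∈ S := fun v => ⟨v, rfl⟩
  have hnilp : ∀ x : S, IsNilpotent (LieModule.toEnd F S C x) := by
    rintro ⟨f, v, rfl⟩
    obtain ⟨m, hm⟩ := h (v : L) v.2
    have hpow : ∀ (k : ℕ) (x : C), (((φ v) ^ k) x : L) = ((A.bracket.flip (v : L)) ^ k) (x : L) := by
      intro k
      induction k with
      | zero => intro x; simp
      | succ k ih =>
        intro x
        rw [pow_succ, Module.End.mul_apply, pow_succ, Module.End.mul_apply, ih]
        congr 1
    have hE : LieModule.toEnd F S C ⟨φ v, hφS v⟩ = φ v := by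
      ext x
      simp [LieModule.toEnd_apply_apply, LieSubalgebra.coe_bracket_of_module,
        Module.End.lie_apply]
    refine ⟨m, ?_⟩
    rw [hE]
    ext x
    rw [hpow m x]
    simpa using hm (x : L) x.2
  haveI : IsNoetherian F S := inferInstance
  have hmodnil : LieModule.IsNilpotent (↥S) (↥C) :=
    LieAlgebra.isEngelian_of_isNoetherian (↥C) hnilp
  obtain ⟨k, hk⟩ := (LieModule.isNilpotent_iff F (↥S) (↥C)).mp hmodnil
  refine ⟨k, le_bot_iff.mp ?_⟩
  have hbr : ∀ j, A.lcs C j ≤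
      Submodule.map C.subtype (LieModule.lowerCentralSeries F (↥S) (↥C) j : Submodule F C) := by
    intro j
    induction j with
    | zero =>
      rw [LieModule.lowerCentralSeries_zero]
      simp [lcs]
    | succ j ih =>
      show A.prod (A.lcs C j) C ≤ _
      refine A.prod_le fun m hm w hw => ?_
      obtain ⟨m', hm', rfl⟩ := ih hm
      refine ⟨⁅(⟨φ ⟨w, hw⟩, hφS _⟩ : S), m'⁆, ?_, ?_⟩
      · rw [LieModule.lowerCentralSeries_succ]
        exact LieSubmodule.lie_mem_lie (LieSubmodule.mem_top _) hm'
      · show ((⁅(⟨φ ⟨w, hw⟩, hφS _⟩ : S), m'⁆ : C) : L) = A.bracket (m' : L) w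
        rw [LieSubalgebra.coe_bracket_of_module, Module.End.lie_apply]
        exact hφ ⟨w, hw⟩ m'
  have := hbr k
  rw [hk] at this
  simpa using this

end LeibnizAlg

/-- If `L` is a Leibniz A-algebra over a field `F` and `B` is an ideal of `L`,
then the quotient Leibniz algebra `L/B` (i.e. any Leibniz algebra structure on `L ⧸ B`
whose bracket is induced by that of `L`) is also an A-algebra. -/
theorem quotient_of_A_algebra_is_A_algebra
    {F L : Type*} [Field F] [AddCommGroup L] [Module F L] [FiniteDimensional F L]
    (A : LeibnizAlg F L) (hA : A.IsAAlgebra)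
    (B : Submodule F L) (hB : A.IsIdeal B)
    (Q : LeibnizAlg F (L ⧸ B))
    (hQ : ∀ x y : L, Q.bracket (B.mkQ x) (B.mkQ y) = B.mkQ (A.bracket x y)) :
    Q.IsAAlgebra := by
  classical
  intro Ubar hUsubQ hUnilQ
  obtain ⟨n, hn⟩ := hUnilQ
  set U : Submodule F L := Ubar.comap B.mkQ with hUdef
  have hsurj : Function.Surjective B.mkQ := Submodule.mkQ_surjective B
  have hπU : U.map B.mkQ = Ubar := Submodule.map_comap_eq_of_surjective hsurj _
  have hBU : B ≤ U := by
    intro b hb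
    show B.mkQ b ∈ Ubar
    have : B.mkQ b = 0 := by
      rw [Submodule.mkQ_apply, Submodule.Quotient.mk_eq_zero]; exact hb
    rw [this]; exact Ubar.zero_mem
  have hUsub : A.IsSubalgebra U := by
    refine A.prod_le fun m hm v hv => ?_
    show B.mkQ (A.bracket m v) ∈ Ubar
    rw [← hQ]
    exact hUsubQ (Q.bracket_mem_prod hm hv)
  have hmap_prod : ∀ M N : Submodule F L,
      (A.prod M N).map B.mkQ = Q.prod (M.map B.mkQ) (N.map B.mkQ) := by
    intro M N
    apply le_antisymm
    · rw [Submodule.map_le_iff_le_comap]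
      refine A.prod_le fun m hm v hv => ?_
      rw [Submodule.mem_comap, ← hQ]
      exact Q.bracket_mem_prod ⟨m, hm, rfl⟩ ⟨v, hv, rfl⟩
    · refine Q.prod_le ?_
      rintro _ ⟨m, hm, rfl⟩ _ ⟨v, hv, rfl⟩
      rw [hQ]
      exact Submodule.mem_map_of_mem (A.bracket_mem_prod hm hv)
  have hlcs : ∀ k, (A.lcs U k).map B.mkQ = Q.lcs Ubar k := by
    intro k; induction k with
    | zero => exact hπU
    | succ k ih =>
      show (A.prod (A.lcs U k) U).map B.mkQ = Q.prod (Q.lcs Ubar k) Ubar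
      rw [hmap_prod, ih, hπU]
  have hUnB : A.lcs U n ≤ B := by
    intro x hx
    have hx' : B.mkQ x ∈ (A.lcs U n).map B.mkQ := Submodule.mem_map_of_mem hx
    rw [hlcs n, hn, Submodule.mem_bot] at hx'
    rw [Submodule.mkQ_apply, Submodule.Quotient.mk_eq_zero] at hx'
    exact hx'
  -- choose a subalgebra C of minimal dimension with B ⊔ C = U
  set P : Submodule F L → Prop := fun D => A.IsSubalgebra D ∧ D ≤ U ∧ B ⊔ D = U with hPdef
  have hPU : P U := ⟨hUsub, le_rfl, sup_eq_right.mpr hBU⟩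
  set s : Set ℕ := {k | ∃ D, P D ∧ Module.finrank F D = k} with hsdef
  have hsne : s.Nonempty := ⟨_, U, hPU, rfl⟩
  obtain ⟨C, hPC, hCrank⟩ : ∃ C, P C ∧ Module.finrank F C = sInf s := Nat.sInf_mem hsne
  have hCmin : ∀ D, P D → D ≤ C → D = C := by
    intro D hPD hDC
    refine Submodule.eq_of_le_of_finrank_le hDC ?_
    rw [hCrank]
    exact Nat.sInf_le ⟨D, hPD, rfl⟩
  obtain ⟨hCsub, hCU, hBC⟩ := hPC
  have hlcsCB : ∀ k, n ≤ k → A.lcs C k ≤ B := fun k hk =>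
    le_trans (A.lcs_le_of_le hCsub hk) (le_trans (A.lcs_mono hCU n) hUnB)
  -- every right multiplication by an element of C is nilpotent on C
  have key : ∀ v ∈ C, ∃ m : ℕ, ∀ x ∈ C, ((A.bracket.flip v) ^ m) x = 0 := by
    intro v hv
    set g : Module.End F L := A.bracket.flip v with hgdef
    have hgval : ∀ x : L, g x = A.bracket x v := fun x => rfl
    have hgC : ∀ x ∈ C, g x ∈ C := fun x hx => hCsub (A.bracket_mem_prod hx hv)
    have hgk : ∀ k, ∀ x ∈ C, (g ^ k) x ∈ C := by
      intro k; induction k with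
      | zero => intro x hx; simpa using hx
      | succ k ih =>
        intro x hx
        rw [pow_succ, Module.End.mul_apply]
        exact ih (g x) (hgC x hx)
    have hgder : ∀ x y : L, g (A.bracket x y) = A.bracket (g x) y + A.bracket x (g y) := by
      intro x y
      rw [hgval, hgval, hgval, A.deriv v x y]
    have hmapval : ∀ k, Submodule.map (g ^ k) C ≤ A.lcs C k := by
      intro k; induction k with
      | zero =>
        rw [pow_zero]
        intro x hx
        obtain ⟨y, hy, rfl⟩ := hx
        simpa [LeibnizAlg.lcs] using hy
      | succ k ih =>
        rw [pow_succ', Module.End.mul_eq_comp, Submodule.map_comp]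
        refine le_trans (Submodule.map_mono ih) ?_
        rw [Submodule.map_le_iff_le_comap]
        intro w hw
        show g w ∈ A.prod (A.lcs C k) C
        rw [hgval]
        exact A.bracket_mem_prod hw hv
    -- stabilization of the kernel chain
    have hker_mono : Monotone fun k => LinearMap.ker (g ^ k) ⊓ C := by
      refine monotone_nat_of_le_succ fun k => ?_
      intro x hx
      have h1 : (g ^ k) x = 0 := LinearMap.mem_ker.mp hx.1
      have h2 : (g ^ (k + 1)) x = 0 := by
        rw [pow_succ', Module.End.mul_apply, h1, map_zero]
      exact ⟨LinearMap.mem_ker.mpr h2, hx.2⟩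
    obtain ⟨m₀, hm₀⟩ := (monotone_stabilizes_iff_noetherian.mpr inferInstance)
      (⟨fun k => LinearMap.ker (g ^ k) ⊓ C, hker_mono⟩ : ℕ →o Submodule F L)
    -- stabilization of the image chain
    have hanti : ∀ j k, j ≤ k → Submodule.map (g ^ k) C ≤ Submodule.map (g ^ j) C := by
      have hstep : ∀ k, Submodule.map (g ^ (k + 1)) C ≤ Submodule.map (g ^ k) C := by
        intro k
        rw [pow_succ, Module.End.mul_eq_comp, Submodule.map_comp]
        refine Submodule.map_mono ?_
        rw [Submodule.map_le_iff_le_comap]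
        intro x hx
        exact hgC x hx
      intro j k h
      exact antitone_nat_of_succ_le (f := fun k => Submodule.map (g ^ k) C) hstep h
    set r : ℕ → ℕ := fun k => Module.finrank F (Submodule.map (g ^ k) C) with hrdef
    obtain ⟨m₁, hm₁⟩ : ∃ m₁, r m₁ = sInf (Set.range r) := Nat.sInf_mem (Set.range_nonempty r)
    have him : ∀ k, m₁ ≤ k → Submodule.map (g ^ k) C = Submodule.map (g ^ m₁) C := by
      intro k hk
      refine Submodule.eq_of_le_of_finrank_le (hanti _ _ hk) ?_
      rw [show Module.finrank F (Submodule.map (g ^ m₁) C) = r m₁ from rfl, hm₁]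
      exact Nat.sInf_le ⟨k, rfl⟩
    set m := m₀ + m₁ + n + 1 with hmdef
    have hm_n : n ≤ m := by omega
    have hker2 : LinearMap.ker (g ^ (m + m)) ⊓ C = LinearMap.ker (g ^ m) ⊓ C :=
      (hm₀ (m + m) (by omega)).symm.trans (hm₀ m (by omega))
    have him2 : Submodule.map (g ^ (m + m)) C = Submodule.map (g ^ m) C :=
      (him (m + m) (by omega)).trans (him m (by omega)).symm
    refine ⟨m, ?_⟩
    set C₀ : Submodule F L := LinearMap.ker (g ^ m) ⊓ C with hC0def
    have hC₀sub : A.IsSubalgebra C₀ := by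
      refine A.prod_le fun x hx y hy => ?_
      obtain ⟨hx1, hx2⟩ := hx
      obtain ⟨hy1, hy2⟩ := hy
      have hxy0 : (g ^ (m + m)) (A.bracket x y) = 0 :=
        A.pow_ker_bracket g hgder (m + m) m m x y rfl hx1 hy1
      have hmem : A.bracket x y ∈ C := hCsub (A.bracket_mem_prod hx2 hy2)
      have : A.bracket x y ∈ LinearMap.ker (g ^ (m + m)) ⊓ C :=
        ⟨LinearMap.mem_ker.mpr hxy0, hmem⟩
      rw [hker2] at this
      exact this
    have hsum : C ≤ B ⊔ C₀ := by
      intro x hx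
      have h1 : (g ^ m) x ∈ Submodule.map (g ^ (m + m)) C := by
        rw [him2]; exact Submodule.mem_map_of_mem hx
      obtain ⟨y, hy, hgy⟩ := h1
      have hzB : (g ^ m) y ∈ B := hlcsCB m hm_n (hmapval m (Submodule.mem_map_of_mem hy))
      have hx0 : x - (g ^ m) y ∈ C₀ := by
        refine ⟨LinearMap.mem_ker.mpr ?_, Submodule.sub_mem C hx (hgk m y hy)⟩
        rw [map_sub, ← Module.End.mul_apply, ← pow_add, hgy, sub_self]
      have hxeq : x = (g ^ m) y + (x - (g ^ m) y) := by abel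
      rw [hxeq]
      exact Submodule.add_mem _ (Submodule.mem_sup_left hzB) (Submodule.mem_sup_right hx0)
    have hPC₀ : P C₀ := by
      refine ⟨hC₀sub, le_trans inf_le_right hCU, ?_⟩
      apply le_antisymm
      · exact sup_le hBU (le_trans inf_le_right hCU)
      · rw [← hBC]
        exact sup_le le_sup_left hsum
    have hC₀C : C₀ = C := hCmin C₀ hPC₀ inf_le_right
    intro x hx
    have hx' : x ∈ C₀ := hC₀C ▸ hx
    exact LinearMap.mem_ker.mp hx'.1
  have hCnil : A.IsNilpotentSub C := A.isNilpotentSub_of_forall_pow hCsub key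
  have hCab : A.prod C C = ⊥ := hA C hCsub hCnil
  have hUUB : A.prod U U ≤ B := by
    refine A.prod_le fun p hp q hq => ?_
    rw [← hBC] at hp hq
    obtain ⟨b, hb, c, hc, rfl⟩ := Submodule.mem_sup.mp hp
    obtain ⟨b', hb', c', hc', rfl⟩ := Submodule.mem_sup.mp hq
    have h1 : A.bracket b (b' + c') ∈ B := hB.1 (A.bracket_mem_prod hb Submodule.mem_top)
    have h2 : A.bracket c b' ∈ B := hB.2 (A.bracket_mem_prod Submodule.mem_top hb')
    have h3 : A.bracket c c' = 0 := by
      have hm := A.bracket_mem_prod hc hc'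
      rw [hCab, Submodule.mem_bot] at hm
      exact hm
    have hexp : A.bracket (b + c) (b' + c')
        = A.bracket b (b' + c') + A.bracket c b' + A.bracket c c' := by
      simp only [map_add, LinearMap.add_apply]
      abel
    rw [hexp, h3, add_zero]
    exact B.add_mem h1 h2
  show Q.prod Ubar Ubar = ⊥
  have hQU : Q.prod Ubar Ubar = (A.prod U U).map B.mkQ := by rw [hmap_prod, hπU]
  refine le_bot_iff.mp ?_
  rw [hQU, Submodule.map_le_iff_le_comap]
  intro x hx
  show B.mkQ x ∈ (⊥ : Submodule F (L ⧸ B))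
  rw [Submodule.mem_bot, Submodule.mkQ_apply, Submodule.Quotient.mk_eq_zero]
  exact hUUB hx
end

section
/- Let A be an abelian ideal of a Leibniz algebra L and let x ∈ L satisfy [x,x] ∈ A. Then L_x^n(A) ⊆ R_x^{n−1}(A) for all n ≥ 1, where L_x and R_x denote the left and right multiplication operators L_x(y) = [x,y] and R_x(y) = [y,x], and L_x^n(A), R_x^{n−1}(A) denote the images of A under the indicated iterates (with R_x^0(A) = A). -/
/-- If `Asub` is an abelian ideal of a Leibniz algebra `L` and `[x,x] ∈ Asub`,
then `L_x^n(Asub) ⊆ R_x^{n-1}(Asub)` for all `n ≥ 1`, where `L_x(y) = [x,y]` and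
`R_x(y) = [y,x]`. -/
theorem leftMul_pow_image_le_rightMul_pow_image
    {F L : Type*} [Field F] [AddCommGroup L] [Module F L] [FiniteDimensional F L]
    (A : LeibnizAlg F L) (Asub : Submodule F L)
    (hIdeal : A.IsIdeal Asub) (hAb : A.IsAbelian Asub)
    (x : L) (hx : A.bracket x x ∈ Asub) :
    ∀ n : ℕ, 1 ≤ n →
      Submodule.map (A.bracket x ^ n) Asub ≤
        Submodule.map (A.bracket.flip x ^ (n - 1)) Asub := by
  classical
  -- basic membership / vanishing facts
  have hmem1 : ∀ a ∈ Asub, ∀ y : L, A.bracket a y ∈ Asub := fun a ha y =>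
    hIdeal.1 (Submodule.subset_span ⟨a, ha, y, trivial, rfl⟩)
  have hmem2 : ∀ a ∈ Asub, ∀ y : L, A.bracket y a ∈ Asub := fun a ha y =>
    hIdeal.2 (Submodule.subset_span ⟨y, trivial, a, ha, rfl⟩)
  have hab : ∀ a ∈ Asub, ∀ b ∈ Asub, A.bracket a b = 0 := by
    intro a ha b hb
    have h : A.bracket a b ∈ A.prod Asub Asub :=
      Submodule.subset_span ⟨a, ha, b, hb, rfl⟩
    rw [hAb, Submodule.mem_bot] at h
    exact h
  set Bx : L →ₗ[F] L := A.bracket x with hBx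
  set Rx : L →ₗ[F] L := A.bracket.flip x with hRx
  have hRxapp : ∀ y : L, Rx y = A.bracket y x := fun y => rfl
  -- R_x^k maps Asub into Asub
  have hRmem : ∀ k : ℕ, ∀ b ∈ Asub, (Rx ^ k) b ∈ Asub := by
    intro k
    induction k with
    | zero => intro b hb; simpa using hb
    | succ k ih =>
      intro b hb
      rw [pow_succ, Module.End.mul_apply]
      exact ih _ (hmem1 b hb x)
  -- for b ∈ Asub : L_x (R_x b) = R_x (L_x b)
  have hkey1 : ∀ b ∈ Asub, Bx (Rx b) = Rx (Bx b) := by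
    intro b hb
    have := A.leibniz x b x
    have h0 : A.bracket (A.bracket x x) b = 0 := hab _ hx _ hb
    simp only [hRxapp, hBx]
    rw [this, h0, sub_zero]
  -- for b ∈ Asub : L_x (L_x b) = - R_x (L_x b)
  have hkey2 : ∀ b ∈ Asub, Bx (Bx b) = - Rx (Bx b) := by
    intro b hb
    have := A.leibniz x x b
    have h0 : A.bracket (A.bracket x x) b = 0 := hab _ hx _ hb
    simp only [hRxapp, hBx]
    rw [this, h0, zero_sub]
  -- L_x commutes with R_x^k on Asub
  have hcomm : ∀ k : ℕ, ∀ b ∈ Asub, Bx ((Rx ^ k) b) = (Rx ^ k) (Bx b) := by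
    intro k
    induction k with
    | zero => intro b hb; simp
    | succ k ih =>
      intro b hb
      simp only [pow_succ', Module.End.mul_apply]
      rw [hkey1 _ (hRmem k b hb), ih b hb]
  -- main formula : (L_x)^(k+1) a = (-1)^k • (R_x)^k (L_x a) for a ∈ Asub
  have hmain : ∀ k : ℕ, ∀ a ∈ Asub, (Bx ^ (k + 1)) a = ((-1 : F) ^ k) • ((Rx ^ k) (Bx a)) := by
    intro k
    induction k with
    | zero => intro a ha; simp
    | succ k ih =>
      intro a ha
      have h1 : (Bx ^ (k + 1 + 1)) a = Bx ((Bx ^ (k + 1)) a) := by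
        rw [pow_succ', Module.End.mul_apply]
      have h2 : (Rx ^ (k + 1)) (Bx a) = (Rx ^ k) (Rx (Bx a)) := by
        rw [pow_succ, Module.End.mul_apply]
      have h3 : ((-1 : F)) ^ (k + 1) = -((-1 : F) ^ k) := by ring
      rw [h1, ih a ha, map_smul, hcomm k (Bx a) (hmem2 a ha x), hkey2 a ha,
        map_neg, smul_neg, h2, h3, neg_smul]
  intro n hn
  obtain ⟨m, rfl⟩ : ∃ m, n = m + 1 := ⟨n - 1, (Nat.succ_pred_eq_of_pos hn).symm⟩
  rintro z ⟨a, ha, rfl⟩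
  rw [hmain m a ha]
  simp only [Nat.add_sub_cancel]
  exact Submodule.smul_mem _ _ ⟨Bx a, hmem2 a ha x, rfl⟩
end
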